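/- arXiv:0904.3433 — 2 statements merged into one kernel-verified Lean document; each statement's English description precedes it below -/
import Mathlib

section
/- Let {a_{i,j}}_{i∈[s], j∈[2]} be natural numbers with total sum at most t and with a_{i,1} + a_{i,2} ≤ S for all i ∈ [s], and let M be a nonempty matching with vertex set V(M). Then there is a mapping φ: [s]×[2] → V(M) such that for all i ∈ [s] the pair {φ(i,1), φ(i,2)} is an edge of M, and for every v ∈ V(M) the sum of a_{i,j} over all (i,j) with φ(i,j) = v is at most t/(2|M|) + 2S. -/
open SimpleGraph

/-- Vertex set of the complete tripartite graph `K_{n,n,n}`. -/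
abbrev TriV (n : ℕ) := (Σ _ : Fin 3, Fin n)

/-- The complete tripartite graph `K_{n,n,n}`. -/
def triK (n : ℕ) : SimpleGraph (TriV n) := completeMultipartiteGraph (fun _ : Fin 3 => Fin n)

/-- The spanning subgraph of a coloured graph formed by the edges of colour `c`. -/
def colSub {V : Type} (G : SimpleGraph V) (col : Sym2 V → Bool) (c : Bool) : SimpleGraph V where
  Adj u v := G.Adj u v ∧ col s(u, v) = c
  symm := by
    constructor
    intro u v h
    refine ⟨h.1.symm, ?_⟩
    rw [Sym2.eq_swap]
    exact h.2
  loopless := ⟨fun v h => G.loopless.irrefl v h.1⟩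

/-- The class `𝒦ηₙ` of spanning subgraphs of `K_{n,n,n}` with minimum degree `> (2-η)n`. -/
def KK (n : ℕ) (η : ℝ) (K : SimpleGraph (TriV n)) : Prop :=
  K ≤ triK n ∧ ∀ v : TriV n, (2 - η) * n < (({u | K.Adj v u} : Set (TriV n)).ncard : ℝ)

/-- `M` is a matching in the graph `G`: a set of pairwise vertex-disjoint edges of `G`. -/
def IsMatching' {V : Type} (G : SimpleGraph V) (M : Finset (Sym2 V)) : Prop :=
  (∀ e ∈ M, e ∈ G.edgeSet) ∧
    ∀ e ∈ M, ∀ f ∈ M, e ≠ f → ∀ v : V, v ∈ e → v ∉ f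

/-- `v` is covered by the matching `M`. -/
def MCovers {V : Type} (M : Finset (Sym2 V)) (v : V) : Prop := ∃ e ∈ M, v ∈ e

/-- The matching `M` is connected in `G`: all covered vertices lie in one component of `G`. -/
def MatchConnected {V : Type} (G : SimpleGraph V) (M : Finset (Sym2 V)) : Prop :=
  ∀ u v : V, MCovers M u → MCovers M v → G.Reachable u v

/-- The matching `M` is odd: the component of `G` containing it has an odd cycle. -/
def MatchOdd {V : Type} (G : SimpleGraph V) (M : Finset (Sym2 V)) : Prop :=
  ∃ (u : V) (p : G.Walk u u), p.IsCycle ∧ Odd p.length ∧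
    ∃ v : V, MCovers M v ∧ G.Reachable u v

/-- A coloured graph is `m`-odd if some colour contains an odd connected matching of
size at least `m`. -/
def mOdd (n : ℕ) (K : SimpleGraph (TriV n)) (col : Sym2 (TriV n) → Bool) (m : ℝ) : Prop :=
  ∃ (c : Bool) (M : Finset (Sym2 (TriV n))),
    IsMatching' (colSub K col c) M ∧ MatchConnected (colSub K col c) M ∧
      MatchOdd (colSub K col c) M ∧ m ≤ (M.card : ℝ)

/-- A fork system of ratio at most `r` in `G`: each element is a fork given by its center
and its (nonempty) set of at most `r` prongs; the forks are pairwise vertex-disjoint. -/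
def IsForkSystem {V : Type} (G : SimpleGraph V) (r : ℕ) (F : Finset (V × Finset V)) : Prop :=
  (∀ p ∈ F, p.2.Nonempty ∧ p.1 ∉ p.2 ∧ p.2.card ≤ r ∧ ∀ v ∈ p.2, G.Adj p.1 v) ∧
    ∀ p ∈ F, ∀ q ∈ F, p ≠ q → ∀ v : V, (v = p.1 ∨ v ∈ p.2) → ¬(v = q.1 ∨ v ∈ q.2)

/-- `v` is covered by the fork system `F`. -/
def FCovers {V : Type} (F : Finset (V × Finset V)) (v : V) : Prop :=
  ∃ p ∈ F, v = p.1 ∨ v ∈ p.2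

/-- The fork system `F` is connected in `G`. -/
def ForkConnected {V : Type} (G : SimpleGraph V) (F : Finset (V × Finset V)) : Prop :=
  ∀ u v : V, FCovers F u → FCovers F v → G.Reachable u v

/-- The size of a fork system: the total number of prongs. -/
def forkSize {V : Type} (F : Finset (V × Finset V)) : ℕ := ∑ p ∈ F, p.2.card

/-- A coloured graph is `(m,f,r)`-good if some colour contains a connected matching of size
at least `m` and a connected fork system of ratio at most `r` and size at least `f`. -/
def Good (n : ℕ) (K : SimpleGraph (TriV n)) (col : Sym2 (TriV n) → Bool)
    (m f : ℝ) (r : ℕ) : Prop :=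
  ∃ c : Bool,
    (∃ M, IsMatching' (colSub K col c) M ∧ MatchConnected (colSub K col c) M ∧
      m ≤ (M.card : ℝ)) ∧
    (∃ F, IsForkSystem (colSub K col c) r F ∧ ForkConnected (colSub K col c) F ∧
      f ≤ (forkSize F : ℝ))

/-- `K[D,D']` is `η`-complete w.r.t. `n`: every vertex of either side has at most `ηn`
non-neighbours on the other side. -/
def EtaComplete {V : Type} (K : SimpleGraph V) (n : ℕ) (η : ℝ) (D D' : Finset V) : Prop :=
  (∀ v ∈ D, (({u | u ∈ D' ∧ ¬K.Adj v u} : Set V).ncard : ℝ) ≤ η * n) ∧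
  (∀ v ∈ D', (({u | u ∈ D ∧ ¬K.Adj u v} : Set V).ncard : ℝ) ≤ η * n)

/-- `K[D,D']` is `(η,c)`-complete: `η`-complete and all its edges have colour `c`. -/
def EtaCComplete {V : Type} (K : SimpleGraph V) (col : Sym2 V → Bool) (n : ℕ) (η : ℝ)
    (c : Bool) (D D' : Finset V) : Prop :=
  EtaComplete K n η D D' ∧ ∀ u ∈ D, ∀ v ∈ D', K.Adj u v → col s(u, v) = c

/-- Pyramid configuration with parameter `η` (Definition (E1)). -/
def PyramidConfig (n : ℕ) (K : SimpleGraph (TriV n)) (col : Sym2 (TriV n) → Bool)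
    (η : ℝ) : Prop :=
  ∃ (c c' : Bool) (D1 D2 D1' D2' : Finset (TriV n)),
    Disjoint D1 D2 ∧ Disjoint D1 D1' ∧ Disjoint D1 D2' ∧ Disjoint D2 D1' ∧
      Disjoint D2 D2' ∧ Disjoint D1' D2' ∧
    D1.card ≤ n ∧ D2.card ≤ n ∧ D1'.card ≤ n ∧ D2'.card ≤ n ∧
    (1 - η) * n ≤ (D1.card : ℝ) ∧ (1 - η) * n ≤ (D2.card : ℝ) ∧
    (1 - η) * n ≤ (D1'.card : ℝ) + (D2'.card : ℝ) ∧
    (D1' = ∅ ∨ 2 * η * n ≤ (D1'.card : ℝ)) ∧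
    (D2' = ∅ ∨ 2 * η * n ≤ (D2'.card : ℝ)) ∧
    EtaCComplete K col n η c D1 D1' ∧ EtaCComplete K col n η c D2 D2' ∧
    EtaComplete K n η D1 D2' ∧ EtaComplete K n η D2 D1' ∧ EtaComplete K n η D1 D2 ∧
    (EtaCComplete K col n η c' D1 D2 ∨
      (EtaCComplete K col n η c' D1 D2' ∧ EtaCComplete K col n η c' D1' D2))

/-- Crossing relation of the six bipartite graphs in the spider configuration. -/
def spiderCross {V : Type} (A1 A2 B1 B2 C1 C2 : Finset V) (u v : V) : Prop :=
  (u ∈ A1 ∧ (v ∈ B2 ∨ v ∈ C2)) ∨ (u ∈ B1 ∧ (v ∈ A2 ∨ v ∈ C2)) ∨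
    (u ∈ C1 ∧ (v ∈ A2 ∨ v ∈ B2))

/-- The union of the six bipartite graphs in the spider configuration, as a graph. -/
def spiderGraph {V : Type} (K : SimpleGraph V) (A1 A2 B1 B2 C1 C2 : Finset V) :
    SimpleGraph V where
  Adj u v := K.Adj u v ∧
    (spiderCross A1 A2 B1 B2 C1 C2 u v ∨ spiderCross A1 A2 B1 B2 C1 C2 v u)
  symm := by
    constructor
    intro u v h
    exact ⟨h.1.symm, h.2.symm⟩
  loopless := ⟨fun v h => K.loopless.irrefl v h.1⟩

/-- Spider configuration with parameter `η` (Definition (E2)). -/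
def SpiderConfig (n : ℕ) (K : SimpleGraph (TriV n)) (col : Sym2 (TriV n) → Bool)
    (η : ℝ) : Prop :=
  ∃ (c : Bool) (A1 A2 B1 B2 C1 C2 : Finset (TriV n)),
    List.Pairwise Disjoint [A1, A2, B1, B2, C1, C2] ∧
    (1 - η) * n ≤ ((A1 ∪ A2).card : ℝ) ∧ (1 - η) * n ≤ ((B1 ∪ B2).card : ℝ) ∧
      (1 - η) * n ≤ ((C1 ∪ C2).card : ℝ) ∧
    EtaCComplete K col n η c A1 B2 ∧ EtaCComplete K col n η c A1 C2 ∧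
    EtaCComplete K col n η c B1 A2 ∧ EtaCComplete K col n η c B1 C2 ∧
    EtaCComplete K col n η c C1 A2 ∧ EtaCComplete K col n η c C1 B2 ∧
    (∀ u ∈ A1 ∪ B1 ∪ C1 ∪ A2 ∪ B2 ∪ C2, ∀ v ∈ A1 ∪ B1 ∪ C1 ∪ A2 ∪ B2 ∪ C2,
      (spiderGraph K A1 A2 B1 B2 C1 C2).Reachable u v) ∧
    ∃ AB AC BA BC CA CB CC : Finset (TriV n),
      A2 = AB ∪ AC ∧ Disjoint AB AC ∧
      B2 = BA ∪ BC ∧ Disjoint BA BC ∧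
      C2 = CA ∪ CB ∪ CC ∧ Disjoint CA CB ∧ Disjoint CA CC ∧ Disjoint CB CC ∧
      (AB = ∅ ∨ 2 * η * n ≤ (AB.card : ℝ)) ∧ (AC = ∅ ∨ 2 * η * n ≤ (AC.card : ℝ)) ∧
      (BA = ∅ ∨ 2 * η * n ≤ (BA.card : ℝ)) ∧ (BC = ∅ ∨ 2 * η * n ≤ (BC.card : ℝ)) ∧
      (CA = ∅ ∨ 2 * η * n ≤ (CA.card : ℝ)) ∧ (CB = ∅ ∨ 2 * η * n ≤ (CB.card : ℝ)) ∧
      (CC = ∅ ∨ 2 * η * n ≤ (CC.card : ℝ)) ∧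
      B1.card ≤ A1.card ∧ (C1 ∪ CC).card ≤ B1.card ∧
      AB.card = BA.card ∧ (AB.card : ℝ) ≤ n - (C2.card : ℝ) ∧
      AC.card = CA.card ∧ (AC.card : ℝ) ≤ n - (B2.card : ℝ) ∧
      BC.card = CB.card ∧ (BC.card : ℝ) ≤ n - (A2.card : ℝ) ∧
      (CC = ∅ ∨ AB = ∅) ∧
      (A2 = ∅ ∨ ((A2 ∪ B2 ∪ CA ∪ CB).card : ℝ) ≤ (1 - η) * (3 / 2) * n) ∧
      (C1 = ∅ ∨ ((A1 ∪ B1 ∪ C1).card : ℝ) < (1 - η) * (3 / 2) * n ∨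
        ((B1 ∪ C1).card : ℝ) ≤ (1 - η) * (3 / 4) * n)

/-- A coloured graph is `η`-extremal if it is in pyramid or spider configuration. -/
def Extremal (n : ℕ) (K : SimpleGraph (TriV n)) (col : Sym2 (TriV n) → Bool)
    (η : ℝ) : Prop :=
  PyramidConfig n K col η ∨ SpiderConfig n K col η

/-- The density of the pair of vertex sets `(U,W)` in `G`. -/
noncomputable def density {V : Type} (G : SimpleGraph V) (U W : Finset V) : ℝ :=
  (({p : V × V | p.1 ∈ U ∧ p.2 ∈ W ∧ G.Adj p.1 p.2} : Set (V × V)).ncard : ℝ) /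
    ((U.card : ℝ) * (W.card : ℝ))

/-- `(U,W)` is an `(ε,d)`-regular pair in `G`. -/
def IsRegularPair {V : Type} (G : SimpleGraph V) (ε d : ℝ) (U W : Finset V) : Prop :=
  d ≤ density G U W ∧
    ∀ U' ⊆ U, ∀ W' ⊆ W, ε * U.card ≤ (U'.card : ℝ) → ε * W.card ≤ (W'.card : ℝ) →
      |density G U' W' - density G U W| ≤ ε

/-- `𝔾` is an `(ε,d)`-reduced graph of `G` with partition `V₀ ∪ V₁ ∪ ... ∪ V_k`
given by the bin set `V0` and the clusters `P i`. -/
def IsReducedGraph {V : Type} [Fintype V] (G : SimpleGraph V) (ε d : ℝ) (k : ℕ)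
    (GG : SimpleGraph (Fin k)) (V0 : Finset V) (P : Fin k → Finset V) : Prop :=
  (∀ i, Disjoint V0 (P i)) ∧ (∀ i j, i ≠ j → Disjoint (P i) (P j)) ∧
    (∀ v : V, v ∈ V0 ∨ ∃ i, v ∈ P i) ∧
    ((V0.card : ℝ) ≤ ε * Fintype.card V) ∧
    (∀ i j, (P i).card = (P j).card) ∧
    (∀ i j, GG.Adj i j → IsRegularPair G ε d (P i) (P j))

/-- The graph obtained from `G` by deleting the vertices in `C` (the deleted vertices
remain as isolated vertices). -/
def delVerts {V : Type} (G : SimpleGraph V) (C : Finset V) : SimpleGraph V where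
  Adj u v := G.Adj u v ∧ u ∉ C ∧ v ∉ C
  symm := by
    constructor
    intro u v h
    exact ⟨h.1.symm, h.2.2, h.2.1⟩
  loopless := ⟨fun v h => G.loopless.irrefl v h.1⟩

/-- `C` is an `S`-cut of `T`: every component of `T - C` has at most `S` vertices. -/
def IsCut {V : Type} (T : SimpleGraph V) (S : ℝ) (C : Finset V) : Prop :=
  ∀ v : V, v ∉ C →
    ((({u | (delVerts T C).Reachable u v} : Set V).ncard : ℝ)) ≤ S

/-- `h` is a `(ρ,L)`-valid assignment of `T` to `GG`. -/
def ValidAssignment {V W : Type} (T : SimpleGraph V) (GG : SimpleGraph W)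
    (ρ L : ℝ) (h : V → W) : Prop :=
  (∀ u v : V, T.Adj u v → GG.Adj (h u) (h v)) ∧
  (∀ x : V, ({i | ∃ y : V, T.Adj x y ∧ h y = i} : Set W).ncard ≤ 2) ∧
  (∀ i : W, (({x : V | h x = i} : Set V).ncard : ℝ) < (1 - ρ) * L)

/-- The bipartite graph `K[D,D']` formed by the edges of `K` between `D` and `D'`. -/
def bipBetween {V : Type} (K : SimpleGraph V) (D D' : Finset V) : SimpleGraph V where
  Adj u v := K.Adj u v ∧ ((u ∈ D ∧ v ∈ D') ∨ (u ∈ D' ∧ v ∈ D))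
  symm := by
    constructor
    intro u v h
    refine ⟨h.1.symm, ?_⟩
    rcases h.2 with ⟨hu, hv⟩ | ⟨hu, hv⟩
    · exact Or.inr ⟨hv, hu⟩
    · exact Or.inl ⟨hv, hu⟩
  loopless := ⟨fun v h => K.loopless.irrefl v h.1⟩

/-- Balance lemma: pairs of weights with pairwise sums `≤ S` can be oriented so that
the two sides differ by at most `S`. -/
lemma bal_aux {ι : Type} [DecidableEq ι] (S : ℕ) (x y : ι → ℕ) (hxy : ∀ i, x i + y i ≤ S)
    (P : Finset ι) :
    ∃ o : ι → Bool,
      (∑ i ∈ P, if o i then y i else x i) ≤ (∑ i ∈ P, if o i then x i else y i) + S ∧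
      (∑ i ∈ P, if o i then x i else y i) ≤ (∑ i ∈ P, if o i then y i else x i) + S := by
  classical
  induction P using Finset.induction_on with
  | empty => exact ⟨fun _ => true, by simp, by simp⟩
  | @insert i P hni ih =>
    obtain ⟨o, h1, h2⟩ := ih
    have hxyi := hxy i
    have sum1 : ∀ bb : Bool,
        (∑ j ∈ insert i P, if (fun j' => if j' = i then bb else o j') j then y j else x j)
          = (if bb then y i else x i) + ∑ j ∈ P, if o j then y j else x j := by
      intro bb
      rw [Finset.sum_insert hni]
      congr 1
      · simp
      · apply Finset.sum_congr rfl
        intro j hj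
        have hji : j ≠ i := fun h => hni (h ▸ hj)
        simp [hji]
    have sum2 : ∀ bb : Bool,
        (∑ j ∈ insert i P, if (fun j' => if j' = i then bb else o j') j then x j else y j)
          = (if bb then x i else y i) + ∑ j ∈ P, if o j then x j else y j := by
      intro bb
      rw [Finset.sum_insert hni]
      congr 1
      · simp
      · apply Finset.sum_congr rfl
        intro j hj
        have hji : j ≠ i := fun h => hni (h ▸ hj)
        simp [hji]
    by_cases hb : (∑ j ∈ P, if o j then y j else x j) + y i ≤
        (∑ j ∈ P, if o j then x j else y j) + x i + S ∧
        (∑ j ∈ P, if o j then x j else y j) + x i ≤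
        (∑ j ∈ P, if o j then y j else x j) + y i + S
    · refine ⟨fun j' => if j' = i then true else o j', ?_, ?_⟩ <;>
        rw [sum1, sum2] <;> simp only [if_true] <;> omega
    · refine ⟨fun j' => if j' = i then false else o j', ?_, ?_⟩ <;>
        rw [sum1, sum2] <;>
        simp only [Bool.false_eq_true, if_false] <;> omega

/-- Lemma 5.2. Weights `a i j` with row sums bounded by `S` and total sum
at most `t` can be distributed over the vertices of a nonempty matching `M`, respecting its
edges, so that each vertex receives weight at most `t/(2|M|) + 2S`. -/
theorem stmt8 {V : Type} [DecidableEq V] (s t S : ℕ) (a : Fin s → Fin 2 → ℕ)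
    (hsum : (∑ i, ∑ j, a i j) ≤ t) (hS : ∀ i, a i 0 + a i 1 ≤ S)
    (M : Finset (Sym2 V)) (hM : M.Nonempty)
    (hdiag : ∀ e ∈ M, ¬ e.IsDiag)
    (hdisj : ∀ e ∈ M, ∀ f ∈ M, e ≠ f → ∀ v : V, v ∈ e → v ∉ f) :
    ∃ φ : Fin s → Fin 2 → V,
      (∀ i, s(φ i 0, φ i 1) ∈ M) ∧
      ∀ v : V, (∃ e ∈ M, v ∈ e) →
        ((∑ i, ∑ j, if φ i j = v then a i j else 0 : ℕ) : ℝ)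
          ≤ (t : ℝ) / (2 * M.card) + 2 * S := by
  classical
  set m := M.card with hmdef
  have hm0 : 0 < m := Finset.card_pos.mpr hM
  -- enumerate the edges of M
  set edge : Fin m → Sym2 V := fun r => (M.equivFin.symm r : Sym2 V) with hedgedef
  have hedgeM : ∀ r, edge r ∈ M := fun r => (M.equivFin.symm r).2
  have hedgeInj : Function.Injective edge :=
    fun r r' h => M.equivFin.symm.injective (Subtype.ext h)
  -- endpoints of each edge
  have hND : ∀ e : Sym2 V, ¬ e.IsDiag → ∃ u w : V, u ≠ w ∧ e = s(u, w) := by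
    intro e
    induction e using Sym2.ind with
    | _ u w => exact fun h => ⟨u, w, fun huw => h (Sym2.mk_isDiag_iff.mpr huw), rfl⟩
  choose U Wt hne hEdgeEq using fun r => hND (edge r) (hdiag _ (hedgeM r))
  -- prefix sums and bucket assignment
  set b : Fin s → ℕ := fun i => a i 0 + a i 1 with hbdef
  set T : Fin s → ℕ := fun i => ∑ i' ∈ Finset.Iio i, b i' with hTdef
  have hTle : ∀ i, T i + b i ≤ t := by
    intro i
    have h1 : T i + b i = ∑ i' ∈ insert i (Finset.Iio i), b i' := by
      rw [Finset.sum_insert (by simp)]; ring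
    have h2 : ∑ i' ∈ insert i (Finset.Iio i), b i' ≤ ∑ i', b i' :=
      Finset.sum_le_sum_of_subset (Finset.subset_univ _)
    have h3 : ∑ i', b i' ≤ t := by
      calc ∑ i', b i' = ∑ i, ∑ j, a i j := by
            apply Finset.sum_congr rfl; intro i _; rw [Fin.sum_univ_two]
        _ ≤ t := hsum
    omega
  set ek : Fin s → Fin m := fun i =>
    ⟨min (m - 1) (T i * m / t), lt_of_le_of_lt (min_le_left _ _) (by omega)⟩ with hekdef
  -- orientations from the balance lemma
  choose oo h1 h2 using fun r : Fin m =>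
    bal_aux S (fun i => a i 0) (fun i => a i 1) hS
      (Finset.univ.filter (fun i => ek i = r))
  set o : Fin s → Bool := fun i => oo (ek i) i with hodef
  set φ : Fin s → Fin 2 → V := fun i j =>
    if j = 0 then (if o i then Wt (ek i) else U (ek i))
    else (if o i then U (ek i) else Wt (ek i)) with hφdef
  have hφmem : ∀ i (j : Fin 2), φ i j ∈ edge (ek i) := by
    intro i j
    rw [hEdgeEq]
    fin_cases j <;> by_cases ho : o i <;> simp [hφdef, ho, Sym2.mem_iff]
  refine ⟨φ, ?_, ?_⟩
  · intro i
    have h0 : φ i 0 = if o i then Wt (ek i) else U (ek i) := by simp [hφdef]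
    have h1' : φ i 1 = if o i then U (ek i) else Wt (ek i) := by
      simp [hφdef]
    rw [h0, h1']
    by_cases ho : o i
    · rw [if_pos ho, if_pos ho, Sym2.eq_swap, ← hEdgeEq]; exact hedgeM _
    · rw [if_neg ho, if_neg ho, ← hEdgeEq]; exact hedgeM _
  · rintro v ⟨e, he, hve⟩
    obtain ⟨r₀, hr₀⟩ : ∃ r, edge r = e :=
      ⟨M.equivFin ⟨e, he⟩, by simp [hedgedef]⟩
    have hkey : ∀ i (j : Fin 2), φ i j = v → ek i = r₀ := by
      intro i j hij
      by_contra hne'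
      have hv1 : v ∈ edge (ek i) := hij ▸ hφmem i j
      have h2' : e ≠ edge (ek i) := fun h => hne' (hedgeInj (h ▸ hr₀ :).symm)
      exact hdisj e he (edge (ek i)) (hedgeM _) h2' v hve hv1
    have hvUW : v = U r₀ ∨ v = Wt r₀ := by
      have := hve
      rw [← hr₀, hEdgeEq r₀] at this
      simpa using this
    set P := Finset.univ.filter (fun i => ek i = r₀) with hPdef
    set Wv := ∑ i, ∑ j, if φ i j = v then a i j else 0 with hWvdef
    set A := ∑ i ∈ P, if oo r₀ i then a i 1 else a i 0 with hAdef
    set B := ∑ i ∈ P, if oo r₀ i then a i 0 else a i 1 with hBdef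
    set E := ∑ i ∈ P, b i with hEdef
    have hAB : A + B = E := by
      rw [hAdef, hBdef, hEdef, ← Finset.sum_add_distrib]
      apply Finset.sum_congr rfl
      intro i _
      by_cases hoi : oo r₀ i <;> simp [hoi, hbdef] <;> ring
    -- Wv equals A or B
    have hUW' : Wt r₀ ≠ U r₀ := Ne.symm (hne r₀)
    have hφ0r : ∀ i, ek i = r₀ → φ i 0 = if o i then Wt r₀ else U r₀ := by
      intro i hr; simp [hφdef, hr]
    have hφ1r : ∀ i, ek i = r₀ → φ i 1 = if o i then U r₀ else Wt r₀ := by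
      intro i hr; simp [hφdef, hr]
    have hinner : ∀ i, (∑ j, if φ i j = v then a i j else 0) =
        if ek i = r₀ then
          (if v = U r₀ then (if o i then a i 1 else a i 0)
           else (if o i then a i 0 else a i 1)) else 0 := by
      intro i
      rw [Fin.sum_univ_two]
      by_cases hr : ek i = r₀
      · rw [if_pos hr, hφ0r i hr, hφ1r i hr]
        rcases hvUW with hv | hv <;> rw [hv] <;>
          by_cases ho : o i <;> simp [ho, hUW', hne r₀]
      · rw [if_neg hr]
        have h0 : φ i 0 ≠ v := fun h => hr (hkey i 0 h)
        have h1' : φ i 1 ≠ v := fun h => hr (hkey i 1 h)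
        simp [h0, h1']
    have hWvAB : Wv = A ∨ Wv = B := by
      have hWv' : Wv = ∑ i ∈ P, (if v = U r₀ then (if o i then a i 1 else a i 0)
          else (if o i then a i 0 else a i 1)) := by
        rw [hWvdef, Finset.sum_congr rfl (fun i _ => hinner i), hPdef,
          ← Finset.sum_filter]
      have hoeq : ∀ i ∈ P, o i = oo r₀ i := by
        intro i hi
        rw [hPdef, Finset.mem_filter] at hi
        simp only [hodef]; rw [hi.2]
      rcases hvUW with hv | hv
      · left
        rw [hWv', hAdef]
        apply Finset.sum_congr rfl
        intro i hi
        rw [if_pos hv, hoeq i hi]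
      · right
        rw [hWv', hBdef]
        apply Finset.sum_congr rfl
        intro i hi
        rw [if_neg (by rw [hv]; exact Ne.symm (hne r₀)), hoeq i hi]
    have hAB1 : A ≤ B + S := by rw [hAdef, hBdef, hPdef]; exact h1 r₀
    have hAB2 : B ≤ A + S := by rw [hAdef, hBdef, hPdef]; exact h2 r₀
    have hF1 : 2 * Wv ≤ E + S := by
      clear_value A B E Wv
      rcases hWvAB with h | h <;> omega
    -- bucket bound : m * E ≤ t + m * S
    have hbucket : m * E ≤ t + m * S := by
      rcases P.eq_empty_or_nonempty with hP | hP
      · rw [hEdef, hP]; simp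
      · set i0 := P.min' hP with hi0def
        set i1 := P.max' hP with hi1def
        have hi0P : i0 ∈ P := P.min'_mem hP
        have hi1P : i1 ∈ P := P.max'_mem hP
        have hi01 : i0 ≤ i1 := P.min'_le _ hi1P
        -- E + T i0 ≤ T i1 + b i1
        have hEineq : E + T i0 ≤ T i1 + b i1 := by
          have hsub : P ⊆ Finset.Icc i0 i1 := by
            intro i hi
            rw [Finset.mem_Icc]
            exact ⟨P.min'_le _ hi, P.le_max' _ hi⟩
          have h1' : E ≤ ∑ i ∈ Finset.Icc i0 i1, b i :=
            Finset.sum_le_sum_of_subset hsub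
          have hsplit : Finset.Iic i1 = Finset.Iio i0 ∪ Finset.Icc i0 i1 := by
            ext x
            simp only [Finset.mem_Iic, Finset.mem_union, Finset.mem_Iio, Finset.mem_Icc]
            constructor
            · intro hx
              rcases lt_or_ge x i0 with h | h
              · exact Or.inl h
              · exact Or.inr ⟨h, hx⟩
            · rintro (h | ⟨_, h2'⟩)
              · exact le_trans h.le hi01
              · exact h2'
          have hdisj' : Disjoint (Finset.Iio i0) (Finset.Icc i0 i1) := by
            rw [Finset.disjoint_left]
            intro x hx1 hx2
            rw [Finset.mem_Iio] at hx1
            rw [Finset.mem_Icc] at hx2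
            exact absurd hx2.1 (not_le.mpr hx1)
          have hIic : Finset.Iic i1 = insert i1 (Finset.Iio i1) := by
            ext x
            simp only [Finset.mem_Iic, Finset.mem_insert, Finset.mem_Iio]
            exact ⟨fun h => (lt_or_eq_of_le h).symm.imp id id, fun h => h.elim le_of_eq le_of_lt⟩
          have hsum1 : T i0 + ∑ i ∈ Finset.Icc i0 i1, b i = T i1 + b i1 := by
            rw [hTdef]
            rw [← Finset.sum_union hdisj', ← hsplit, hIic,
              Finset.sum_insert (by simp)]
            ring
          omega
        -- m * (T i1 - T i0) ≤ t
        have hTmono : T i0 ≤ T i1 :=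
          Finset.sum_le_sum_of_subset (Finset.Iio_subset_Iio hi01)
        have hkey2 : m * T i1 ≤ t + m * T i0 := by
          rcases Nat.eq_zero_or_pos t with ht | ht
          · have := hTle i1
            have hT1 : T i1 = 0 := by omega
            rw [hT1, Nat.mul_zero]
            exact Nat.zero_le _
          · have heq : min (m - 1) (T i0 * m / t) = min (m - 1) (T i1 * m / t) := by
              have e0 : ek i0 = r₀ := by
                have := hi0P; rw [hPdef, Finset.mem_filter] at this; exact this.2
              have e1 : ek i1 = r₀ := by
                have := hi1P; rw [hPdef, Finset.mem_filter] at this; exact this.2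
              have := e0.trans e1.symm
              rw [hekdef] at this
              exact congrArg Fin.val this
            rcases le_or_gt (m - 1) (T i0 * m / t) with hc | hc
            · -- capped case: (m-1) * t ≤ T i0 * m and T i1 * m ≤ t * m
              have hc1 : (m - 1) * t ≤ T i0 * m := (Nat.le_div_iff_mul_le ht).mp hc
              have hc2 : T i1 * m ≤ t * m := Nat.mul_le_mul_right m (by have := hTle i1; omega)
              have : m * T i1 ≤ m * t := by rw [Nat.mul_comm m (T i1), Nat.mul_comm m t]; exact hc2
              have hm1 : m - 1 + 1 = m := Nat.succ_pred_eq_of_pos hm0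
              have hmt : (m - 1) * t + t = m * t := by
                calc (m - 1) * t + t = ((m - 1) + 1) * t := by ring
                  _ = m * t := by rw [hm1]
              calc m * T i1 ≤ m * t := this
                _ = (m - 1) * t + t := hmt.symm
                _ ≤ T i0 * m + t := by omega
                _ = t + m * T i0 := by ring
            · -- uncapped: both divisions equal
              have hd0 : min (m - 1) (T i0 * m / t) = T i0 * m / t :=
                min_eq_right (le_of_lt hc)
              have hdlt : T i1 * m / t = T i0 * m / t := by
                rcases min_cases (m - 1) (T i1 * m / t) with ⟨hmin, hle⟩ | ⟨hmin, hlt⟩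
                · exfalso
                  have hcontra : T i0 * m / t = m - 1 := by rw [← hd0, heq, hmin]
                  omega
                · rw [heq, hmin] at hd0
                  omega
              have hub : T i1 * m < (T i0 * m / t + 1) * t := by
                rw [← hdlt]
                exact (Nat.div_lt_iff_lt_mul ht).mp (Nat.lt_succ_self _)
              have hlb : (T i0 * m / t) * t ≤ T i0 * m := Nat.div_mul_le_self _ _
              have : T i1 * m < T i0 * m + t := by
                have hexp : (T i0 * m / t + 1) * t = (T i0 * m / t) * t + t := by ring
                omega
              calc m * T i1 = T i1 * m := Nat.mul_comm _ _
                _ ≤ T i0 * m + t := by omega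
                _ = t + m * T i0 := by ring
        -- combine
        have hmb : m * b i1 ≤ m * S := Nat.mul_le_mul_left m (hS i1)
        have hmE : m * E + m * T i0 ≤ m * T i1 + m * b i1 := by
          calc m * E + m * T i0 = m * (E + T i0) := by ring
            _ ≤ m * (T i1 + b i1) := Nat.mul_le_mul_left m hEineq
            _ = m * T i1 + m * b i1 := by ring
        omega
    -- final: 2 * m * Wv ≤ t + 2 * m * S, transfer to ℝ
    have hfinal : 2 * (m * Wv) ≤ t + 2 * (m * S) := by
      have h2' : m * (2 * Wv) ≤ m * (E + S) := Nat.mul_le_mul_left m hF1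
      have e1 : m * (2 * Wv) = 2 * (m * Wv) := by ring
      have e2 : m * (E + S) = m * E + m * S := by ring
      rw [e1, e2] at h2'
      omega
    clear_value Wv
    have hmpos : (0 : ℝ) < (m : ℝ) := by exact_mod_cast hm0
    have hmR : (0 : ℝ) < 2 * (m : ℝ) := by linarith
    have hcast : 2 * ((m : ℝ) * Wv) ≤ (t : ℝ) + 2 * ((m : ℝ) * S) := by
      exact_mod_cast hfinal
    have hSR : (0 : ℝ) ≤ (S : ℝ) := Nat.cast_nonneg S
    have h1R : (Wv : ℝ) ≤ ((t : ℝ) + 2 * m * S) / (2 * m) := by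
      rw [le_div_iff₀ hmR]
      nlinarith [hcast]
    have h2R : ((t : ℝ) + 2 * m * S) / (2 * m) = (t : ℝ) / (2 * m) + S := by
      rw [add_div, mul_div_cancel_left₀ _ (ne_of_gt hmR)]
    linarith [h1R, h2R.le, hSR]
end

section
/- Let K ∈ 𝒦ηₙ have partition classes A, B, C and let A' ⊆ A, B' ⊆ B, C' ⊆ C with |A'| ≥ |B'| ≥ |C'|. If |A'| ≤ |B'| + |C'|, then there is a matching in K using only edges among A', B', C' (between distinct classes) that covers at least |A'| + |B'| + |C'| − 4ηn − 1 vertices. -/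
open SimpleGraph

attribute [local instance] Classical.propDecidable

lemma classCard (n : ℕ) (i : Fin 3) :
    (Finset.univ.filter fun u : TriV n => u.1 = i).card = n := by
  have h : (Finset.univ.filter fun u : TriV n => u.1 = i)
      = Finset.univ.map ⟨fun x : Fin n => (⟨i, x⟩ : TriV n), fun a b h => by
          simpa using h⟩ := by
    ext ⟨j, x⟩
    simp only [Finset.mem_filter, Finset.mem_map, Finset.mem_univ, true_and,
      Function.Embedding.coeFn_mk]
    constructor
    · rintro rfl; exact ⟨x, rfl⟩
    · rintro ⟨y, h⟩; cases h; rfl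
  rw [h, Finset.card_map, Finset.card_univ, Fintype.card_fin]

lemma adj_ne_fst {n : ℕ} {K : SimpleGraph (TriV n)} (hle : K ≤ triK n) {u v : TriV n}
    (h : K.Adj u v) : u.1 ≠ v.1 := by
  have h2 := hle h
  simpa [triK] using h2

lemma thirdClass : ∀ i k : Fin 3, i ≠ k → ∃ j, ∀ c : Fin 3, c ≠ i → c ≠ k → c = j := by
  decide

lemma nonNbr {n : ℕ} {η : ℝ} {K : SimpleGraph (TriV n)} (hK : KK n η K)
    (v : TriV n) (i : Fin 3) (hvi : i ≠ v.1)
    [DecidablePred fun u : TriV n => u.1 = i ∧ ¬K.Adj v u] :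
    ((Finset.univ.filter fun u : TriV n => u.1 = i ∧ ¬K.Adj v u).card : ℝ) < η * n := by
  obtain ⟨hle, hdeg⟩ := hK
  set N : Finset (TriV n) := Finset.univ.filter (fun u => K.Adj v u) with hN
  have hncard : ({u | K.Adj v u} : Set (TriV n)).ncard = N.card := by
    have : ({u | K.Adj v u} : Set (TriV n)) = ↑N := by ext u; simp [hN]
    rw [this, Set.ncard_coe_finset]
  have hdegN : (2 - η) * n < (N.card : ℝ) := by
    have := hdeg v; rwa [hncard] at this
  have hsplit : (N.filter fun u => u.1 = i).card + (N.filter fun u => ¬u.1 = i).card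
      = N.card := Finset.card_filter_add_card_filter_not (fun u : TriV n => u.1 = i)
  have e1 : (N.filter fun u => u.1 = i).card
      + (Finset.univ.filter fun u : TriV n => u.1 = i ∧ ¬K.Adj v u).card = n := by
    have hdisj : Disjoint (N.filter fun u => u.1 = i)
        (Finset.univ.filter fun u : TriV n => u.1 = i ∧ ¬K.Adj v u) := by
      rw [Finset.disjoint_left]
      intro u hu hu'
      simp only [hN, Finset.mem_filter, Finset.mem_univ, true_and] at hu hu'
      exact hu'.2 hu.1
    have hu : (N.filter fun u => u.1 = i) ∪
        (Finset.univ.filter fun u : TriV n => u.1 = i ∧ ¬K.Adj v u)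
        = Finset.univ.filter (fun u : TriV n => u.1 = i) := by
      ext u
      simp only [hN, Finset.mem_union, Finset.mem_filter, Finset.mem_univ, true_and,
        Finset.filter_filter]
      tauto
    calc (N.filter fun u => u.1 = i).card
        + (Finset.univ.filter fun u : TriV n => u.1 = i ∧ ¬K.Adj v u).card
        = ((N.filter fun u => u.1 = i) ∪
          (Finset.univ.filter fun u : TriV n => u.1 = i ∧ ¬K.Adj v u)).card :=
          (Finset.card_union_of_disjoint hdisj).symm
      _ = n := by rw [hu]; exact classCard n i
  obtain ⟨j, hj⟩ : ∃ j, ∀ c : Fin 3, c ≠ i → c ≠ v.1 → c = j := thirdClass i v.1 hvi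
  have e2 : (N.filter fun u => ¬u.1 = i).card ≤ n := by
    calc (N.filter fun u => ¬u.1 = i).card
        ≤ (Finset.univ.filter fun u : TriV n => u.1 = j).card := by
          apply Finset.card_le_card
          intro u hu
          simp only [hN, Finset.mem_filter, Finset.mem_univ, true_and,
            Finset.filter_filter] at hu ⊢
          exact hj u.1 hu.2 (Ne.symm (adj_ne_fst hle hu.1))
      _ = n := classCard n j
  have := Finset.card_le_card (Finset.filter_subset (fun u => u.1 = i) N)
  -- (filter i N).card ≤ N.card, combine in ℝ
  have h1 : ((N.filter fun u => u.1 = i).card : ℝ)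
      + ((Finset.univ.filter fun u : TriV n => u.1 = i ∧ ¬K.Adj v u).card : ℝ) = n := by
    exact_mod_cast e1
  have h2 : ((N.card : ℝ)) ≤ ((N.filter fun u => u.1 = i).card : ℝ) + n := by
    have : (N.card : ℝ) = ((N.filter fun u => u.1 = i).card : ℝ)
        + ((N.filter fun u => ¬u.1 = i).card : ℝ) := by exact_mod_cast hsplit.symm
    rw [this]
    have : ((N.filter fun u => ¬u.1 = i).card : ℝ) ≤ n := by exact_mod_cast e2
    linarith
  linarith

lemma etaPos {n : ℕ} {η : ℝ} {K : SimpleGraph (TriV n)} (hK : KK n η K)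
    (v : TriV n) : 0 < η * n := by
  obtain ⟨i, hi⟩ : ∃ i : Fin 3, i ≠ v.1 := by
    rcases exists_ne (v.1) with ⟨i, hi⟩; exact ⟨i, hi⟩
  have := nonNbr hK v i hi
  have h0 : (0 : ℝ) ≤ ((Finset.univ.filter fun u : TriV n => u.1 = i ∧ ¬K.Adj v u).card : ℝ) :=
    Nat.cast_nonneg _
  linarith

lemma edge_rep {V : Type} {K : SimpleGraph V} {e : Sym2 V} (he : e ∈ K.edgeSet) :
    ∃ a b, e = s(a, b) ∧ K.Adj a b := by
  induction e with
  | _ a b => exact ⟨a, b, rfl, he⟩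

lemma cov_card {V : Type} [Fintype V] {K : SimpleGraph V} {M : Finset (Sym2 V)}
    (hM : IsMatching' K M) (S : Finset V) (hsupp : ∀ e ∈ M, ∀ v, v ∈ e → v ∈ S)
    [DecidablePred fun v : V => MCovers M v] :
    (S.filter (fun v => MCovers M v)).card = 2 * M.card := by
  classical
  have key : S.filter (fun v => MCovers M v)
      = M.biUnion (fun e => Finset.univ.filter (· ∈ e)) := by
    ext v
    simp only [Finset.mem_filter, Finset.mem_biUnion, Finset.mem_univ, true_and]
    simp only [MCovers]
    constructor
    · rintro ⟨-, e, he, hv⟩; exact ⟨e, he, hv⟩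
    · rintro ⟨e, he, hv⟩; exact ⟨hsupp e he v hv, e, he, hv⟩
  rw [key, Finset.card_biUnion]
  · rw [Finset.sum_congr rfl (g := fun _ => 2) (fun e he => ?_), Finset.sum_const,
      smul_eq_mul, mul_comm]
    obtain ⟨a, b, rfl, hadj⟩ := edge_rep (hM.1 e he)
    have hab : a ≠ b := hadj.ne
    have : (Finset.univ.filter (· ∈ s(a, b))) = {a, b} := by
      ext v
      simp [Sym2.mem_iff]
    rw [this, Finset.card_insert_of_notMem (by simpa using hab), Finset.card_singleton]
  · intro e he f hf hef
    rw [Function.onFun, Finset.disjoint_left]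
    intro v hv hv'
    simp only [Finset.mem_filter, Finset.mem_univ, true_and] at hv hv'
    exact hM.2 e he f hf hef v hv hv'

lemma covX_card {V : Type} [Fintype V] {K : SimpleGraph V} {M : Finset (Sym2 V)}
    (hM : IsMatching' K M) (X' : Finset V)
    (hone : ∀ e ∈ M, ∀ a b : V, e = s(a, b) → a ∈ X' → b ∈ X' → a = b)
    [DecidablePred fun v : V => MCovers M v]
    [DecidablePred fun e : Sym2 V => ∃ v ∈ e, v ∈ X'] :
    (X'.filter (fun v => MCovers M v)).card = (M.filter (fun e => ∃ v ∈ e, v ∈ X')).card := by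
  classical
  have key : X'.filter (fun v => MCovers M v)
      = (M.filter (fun e => ∃ v ∈ e, v ∈ X')).biUnion (fun e => X'.filter (· ∈ e)) := by
    ext v
    simp only [Finset.mem_filter, Finset.mem_biUnion]
    simp only [MCovers]
    constructor
    · rintro ⟨hvX, e, he, hv⟩; exact ⟨e, ⟨he, v, hv, hvX⟩, hvX, hv⟩
    · rintro ⟨e, ⟨he, -⟩, hvX, hv⟩; exact ⟨hvX, e, he, hv⟩
  rw [key, Finset.card_biUnion]
  · rw [Finset.sum_congr rfl (g := fun _ => 1) (fun e he => ?_), Finset.sum_const,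
      smul_eq_mul, mul_one]
    rw [Finset.mem_filter] at he
    obtain ⟨heM, w, hwe, hwX⟩ := he
    obtain ⟨a, b, rfl, hadj⟩ := edge_rep (hM.1 e heM)
    have hab : a ≠ b := hadj.ne
    rcases (Sym2.mem_iff.1 hwe) with rfl | rfl
    · have hbX : b ∉ X' := fun hb => hab (hone _ heM _ _ rfl hwX hb)
      have : X'.filter (· ∈ s(w, b)) = {w} := by
        ext v
        simp only [Finset.mem_filter, Sym2.mem_iff, Finset.mem_singleton]
        constructor
        · rintro ⟨hvX, rfl | rfl⟩
          · rfl
          · exact absurd hvX hbX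
        · rintro rfl; exact ⟨hwX, Or.inl rfl⟩
      rw [this, Finset.card_singleton]
    · have haX : a ∉ X' := fun ha => hab (hone _ heM _ _ rfl ha hwX)
      have : X'.filter (· ∈ s(a, w)) = {w} := by
        ext v
        simp only [Finset.mem_filter, Sym2.mem_iff, Finset.mem_singleton]
        constructor
        · rintro ⟨hvX, rfl | rfl⟩
          · exact absurd hvX haX
          · rfl
        · rintro rfl; exact ⟨hwX, Or.inr rfl⟩
      rw [this, Finset.card_singleton]
  · intro e he f hf hef
    rw [Function.onFun, Finset.disjoint_left]
    intro v hv hv'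
    simp only [Finset.mem_coe, Finset.mem_filter] at hv hv' he hf
    exact hM.2 e he.1 f hf.1 hef v hv.2 hv'.2

lemma edges_le_verts {V : Type} [Fintype V] {K : SimpleGraph V} {M : Finset (Sym2 V)}
    (hM : IsMatching' K M) (Q : V → Prop)
    [DecidablePred Q] [DecidablePred fun e : Sym2 V => ∃ v ∈ e, Q v] :
    (M.filter (fun e => ∃ v ∈ e, Q v)).card ≤ (Finset.univ.filter (fun v => Q v)).card := by
  classical
  set T := M.filter (fun e => ∃ v ∈ e, Q v) with hT
  have hsub : T.biUnion (fun e => Finset.univ.filter (fun v => v ∈ e ∧ Q v))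
      ⊆ Finset.univ.filter (fun v => Q v) := by
    intro v hv
    simp only [Finset.mem_biUnion, Finset.mem_filter, Finset.mem_univ, true_and] at hv ⊢
    obtain ⟨e, -, -, hQ⟩ := hv
    exact hQ
  calc T.card = ∑ e ∈ T, 1 := by simp
    _ ≤ ∑ e ∈ T, (Finset.univ.filter (fun v => v ∈ e ∧ Q v)).card := by
        apply Finset.sum_le_sum
        intro e he
        rw [hT, Finset.mem_filter] at he
        obtain ⟨-, w, hw, hQ⟩ := he
        refine Finset.card_pos.2 ⟨w, ?_⟩
        simp [hw, hQ]
    _ = (T.biUnion (fun e => Finset.univ.filter (fun v => v ∈ e ∧ Q v))).card := by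
        rw [Finset.card_biUnion]
        intro e he f hf hef
        rw [Function.onFun, Finset.disjoint_left]
        intro v hv hv'
        simp only [Finset.mem_coe, Finset.mem_filter, Finset.mem_univ, true_and, hT] at hv hv' he hf
        exact hM.2 e he.1 f hf.1 hef v hv.1 hv'.1
    _ ≤ _ := Finset.card_le_card hsub

lemma no_unc_adj {V : Type} {K : SimpleGraph V} {M : Finset (Sym2 V)} {S : Finset V}
    (hM : IsMatching' K M) (hmax : ∀ M', IsMatching' K M' →
      (∀ e ∈ M', ∀ v, v ∈ e → v ∈ S) → M'.card ≤ M.card)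
    (hsupp : ∀ e ∈ M, ∀ v, v ∈ e → v ∈ S)
    {u v : V} (hu : u ∈ S) (hv : v ∈ S)
    (hcu : ¬ MCovers M u) (hcv : ¬ MCovers M v) : ¬ K.Adj u v := by
  classical
  intro hadj
  have hnm : s(u, v) ∉ M := fun h => hcu ⟨s(u, v), h, by simp⟩
  have hmatch : IsMatching' K (insert s(u, v) M) := by
    constructor
    · intro e he
      rcases Finset.mem_insert.1 he with rfl | he
      · exact hadj
      · exact hM.1 e he
    · intro e he f hf hef w hwe hwf
      rcases Finset.mem_insert.1 he with rfl | he' <;>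
        rcases Finset.mem_insert.1 hf with rfl | hf'
      · exact hef rfl
      · rcases Sym2.mem_iff.1 hwe with rfl | rfl
        · exact hcu ⟨f, hf', hwf⟩
        · exact hcv ⟨f, hf', hwf⟩
      · rcases Sym2.mem_iff.1 hwf with rfl | rfl
        · exact hcu ⟨e, he', hwe⟩
        · exact hcv ⟨e, he', hwe⟩
      · exact hM.2 e he' f hf' hef w hwe hwf
  have hsupp' : ∀ e ∈ insert s(u, v) M, ∀ w, w ∈ e → w ∈ S := by
    intro e he w hw
    rcases Finset.mem_insert.1 he with rfl | he
    · rcases Sym2.mem_iff.1 hw with rfl | rfl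
      · exact hu
      · exact hv
    · exact hsupp e he w hw
  have := hmax _ hmatch hsupp'
  rw [Finset.card_insert_of_notMem hnm] at this
  omega

set_option maxHeartbeats 2000000 in
lemma oneClass {n : ℕ} {η : ℝ} {K : SimpleGraph (TriV n)} (hK : KK n η K)
    (S X' Y' Z' : Finset (TriV n)) (ix iy iz : Fin 3)
    (hxy : ix ≠ iy) (hxz : ix ≠ iz) (hyz : iy ≠ iz)
    (hXc : ∀ v ∈ X', v.1 = ix) (hYc : ∀ v ∈ Y', v.1 = iy) (hZc : ∀ v ∈ Z', v.1 = iz)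
    (hS : S = X' ∪ Y' ∪ Z')
    (hX3 : X'.card ≤ Y'.card + Z'.card)
    {M : Finset (Sym2 (TriV n))}
    (hM : IsMatching' K M)
    (hsupp : ∀ e ∈ M, ∀ v, v ∈ e → v ∈ S)
    (hmax : ∀ M', IsMatching' K M' → (∀ e ∈ M', ∀ v, v ∈ e → v ∈ S) → M'.card ≤ M.card)
    (hUX : ∀ u ∈ S, ¬ MCovers M u → u ∈ X') :
    ((S.filter (fun v => ¬ MCovers M v)).card : ℝ) ≤ 4 * (η * n) + 1 := by
  classical
  by_contra hcon
  push_neg at hcon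
  set U := S.filter (fun v => ¬ MCovers M v) with hU
  -- nontrivial n
  rcases Nat.eq_zero_or_pos n with hn | hn
  · subst hn
    have h0 : U.card = 0 := Nat.le_zero.1
      (le_trans (Finset.card_le_card (Finset.subset_univ U)) (by simp))
    rw [h0] at hcon
    push_cast at hcon
    linarith
  -- a vertex exists
  have v0 : TriV n := ⟨0, ⟨0, hn⟩⟩
  have hηn : 0 < η * n := etaPos hK v0
  have hU2 : 1 < U.card := by
    have : (1 : ℝ) < (U.card : ℝ) := by linarith
    exact_mod_cast this
  obtain ⟨u1, hu1U, u2, hu2U, hu12⟩ := Finset.one_lt_card.1 hU2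
  have hUmem : ∀ u ∈ U, u ∈ S ∧ ¬ MCovers M u := by
    intro u hu
    simpa [hU] using (Finset.mem_filter.1 hu)
  have hnoadj : ∀ u ∈ U, ∀ v ∈ U, ¬ K.Adj u v := by
    intro u hu v hv
    exact no_unc_adj hM hmax hsupp (hUmem u hu).1 (hUmem v hv).1 (hUmem u hu).2 (hUmem v hv).2
  have hu1X : u1 ∈ X' := hUX u1 (hUmem u1 hu1U).1 (hUmem u1 hu1U).2
  have hu2X : u2 ∈ X' := hUX u2 (hUmem u2 hu2U).1 (hUmem u2 hu2U).2
  have hle := hK.1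
  -- class disjointness helpers
  have hXY : ∀ v, v ∈ X' → v ∈ Y' → False := fun v hvX hvY => hxy ((hXc v hvX) ▸ (hYc v hvY) ▸ rfl)
  have hXZ : ∀ v, v ∈ X' → v ∈ Z' → False := fun v hvX hvZ => hxz ((hXc v hvX) ▸ (hZc v hvZ) ▸ rfl)
  have hYZ : ∀ v, v ∈ Y' → v ∈ Z' → False := fun v hvY hvZ => hyz ((hYc v hvY) ▸ (hZc v hvZ) ▸ rfl)
  -- edge splitting
  set eX := M.filter (fun e => ∃ v ∈ e, v ∈ X') with heX
  set eYZ := M.filter (fun e => ¬ ∃ v ∈ e, v ∈ X') with heYZ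
  have eqM : eX.card + eYZ.card = M.card :=
    Finset.card_filter_add_card_filter_not (fun e => ∃ v ∈ e, v ∈ X')
  have eq3 : (S.filter (fun v => MCovers M v)).card = 2 * M.card := cov_card hM S hsupp
  have eq5 : (X'.filter (fun v => MCovers M v)).card = eX.card := by
    apply covX_card hM X'
    intro e he a b hrep haX hbX
    have hadj : K.Adj a b := by
      have := hM.1 e he
      rw [hrep] at this
      exact this
    exact absurd ((hXc a haX).trans (hXc b hbX).symm) (adj_ne_fst hle hadj)
  have eqCov : (S.filter (fun v => MCovers M v)).card
      = (X'.filter (fun v => MCovers M v)).card + (Y'.filter (fun v => MCovers M v)).card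
        + (Z'.filter (fun v => MCovers M v)).card := by
    rw [hS, Finset.filter_union, Finset.filter_union]
    rw [Finset.card_union_of_disjoint, Finset.card_union_of_disjoint]
    · rw [Finset.disjoint_left]
      intro v hv hv'
      rw [Finset.mem_filter] at hv hv'
      exact hXY v hv.1 hv'.1
    · rw [Finset.disjoint_left]
      intro v hv hv'
      rw [Finset.mem_union, Finset.mem_filter, Finset.mem_filter] at hv
      rw [Finset.mem_filter] at hv'
      rcases hv with hv | hv
      · exact hXZ v hv.1 hv'.1
      · exact hYZ v hv.1 hv'.1
  have eqY : (Y'.filter (fun v => MCovers M v)).card = Y'.card := by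
    rw [Finset.filter_true_of_mem]
    intro v hvY
    by_contra hnc
    exact hXY v (hUX v (by rw [hS]; exact Finset.mem_union_left _ (Finset.mem_union_right _ hvY)) hnc) hvY
  have eqZ : (Z'.filter (fun v => MCovers M v)).card = Z'.card := by
    rw [Finset.filter_true_of_mem]
    intro v hvZ
    by_contra hnc
    exact hXZ v (hUX v (by rw [hS]; exact Finset.mem_union_right _ hvZ) hnc) hvZ
  have eqX : (X'.filter (fun v => MCovers M v)).card + U.card = X'.card := by
    have hUeq : U = X'.filter (fun v => ¬ MCovers M v) := by
      ext v
      simp only [hU, Finset.mem_filter]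
      constructor
      · rintro ⟨hvS, hnc⟩; exact ⟨hUX v hvS hnc, hnc⟩
      · rintro ⟨hvX, hnc⟩
        exact ⟨by rw [hS]; exact Finset.mem_union_left _ (Finset.mem_union_left _ hvX), hnc⟩
    rw [hUeq]
    exact Finset.card_filter_add_card_filter_not (fun v => MCovers M v)
  have hstep1 : U.card ≤ 2 * eYZ.card := by omega
  -- Step 2 : eYZ is small
  have hstep2 : (eYZ.card : ℝ) ≤ 2 * (η * n) := by
    by_contra h2
    push_neg at h2
    have hcu1 : ¬ MCovers M u1 := (hUmem u1 hu1U).2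
    have hcu2 : ¬ MCovers M u2 := (hUmem u2 hu2U).2
    set bad1 := eYZ.filter (fun e => ∃ v ∈ e, v ∈ Y' ∧ ¬K.Adj u1 v) with hbad1
    set bad2 := eYZ.filter (fun e => ∃ v ∈ e, v ∈ Z' ∧ ¬K.Adj u2 v) with hbad2
    have hb1 : (bad1.card : ℝ) < η * n := by
      have hsub1 : bad1 ⊆ M.filter (fun e => ∃ v ∈ e, v ∈ Y' ∧ ¬K.Adj u1 v) := by
        intro e he
        rw [hbad1, Finset.mem_filter, heYZ, Finset.mem_filter] at he
        exact Finset.mem_filter.2 ⟨he.1.1, he.2⟩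
      have hlev := edges_le_verts hM (fun v => v ∈ Y' ∧ ¬K.Adj u1 v)
      have hsub2 : Finset.univ.filter (fun v : TriV n => v ∈ Y' ∧ ¬K.Adj u1 v)
          ⊆ Finset.univ.filter (fun v : TriV n => v.1 = iy ∧ ¬K.Adj u1 v) := by
        intro v hv
        rw [Finset.mem_filter] at hv ⊢
        exact ⟨hv.1, hYc v hv.2.1, hv.2.2⟩
      have hnn := nonNbr hK u1 iy (by rw [hXc u1 hu1X]; exact hxy.symm)
      have hle1 : bad1.card ≤ (Finset.univ.filter
          (fun v : TriV n => v.1 = iy ∧ ¬K.Adj u1 v)).card :=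
        le_trans (Finset.card_le_card hsub1) (le_trans hlev (Finset.card_le_card hsub2))
      have : (bad1.card : ℝ) ≤ ((Finset.univ.filter
          (fun v : TriV n => v.1 = iy ∧ ¬K.Adj u1 v)).card : ℝ) := by exact_mod_cast hle1
      linarith
    have hb2 : (bad2.card : ℝ) < η * n := by
      have hsub1 : bad2 ⊆ M.filter (fun e => ∃ v ∈ e, v ∈ Z' ∧ ¬K.Adj u2 v) := by
        intro e he
        rw [hbad2, Finset.mem_filter, heYZ, Finset.mem_filter] at he
        exact Finset.mem_filter.2 ⟨he.1.1, he.2⟩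
      have hlev := edges_le_verts hM (fun v => v ∈ Z' ∧ ¬K.Adj u2 v)
      have hsub2 : Finset.univ.filter (fun v : TriV n => v ∈ Z' ∧ ¬K.Adj u2 v)
          ⊆ Finset.univ.filter (fun v : TriV n => v.1 = iz ∧ ¬K.Adj u2 v) := by
        intro v hv
        rw [Finset.mem_filter] at hv ⊢
        exact ⟨hv.1, hZc v hv.2.1, hv.2.2⟩
      have hnn := nonNbr hK u2 iz (by rw [hXc u2 hu2X]; exact hxz.symm)
      have hle1 : bad2.card ≤ (Finset.univ.filter
          (fun v : TriV n => v.1 = iz ∧ ¬K.Adj u2 v)).card :=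
        le_trans (Finset.card_le_card hsub1) (le_trans hlev (Finset.card_le_card hsub2))
      have : (bad2.card : ℝ) ≤ ((Finset.univ.filter
          (fun v : TriV n => v.1 = iz ∧ ¬K.Adj u2 v)).card : ℝ) := by exact_mod_cast hle1
      linarith
    have hcards : bad1.card + bad2.card < eYZ.card := by
      have h' : ((bad1.card + bad2.card : ℕ) : ℝ) < (eYZ.card : ℝ) := by push_cast; linarith
      exact_mod_cast h'
    have hnsub : ¬ eYZ ⊆ bad1 ∪ bad2 := by
      intro hsub
      have hc1 := Finset.card_le_card hsub
      have hc2 := Finset.card_union_le bad1 bad2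
      omega
    obtain ⟨e, heYZm, hnb⟩ := Finset.not_subset.1 hnsub
    have heM : e ∈ M := by
      have h' := heYZm; rw [heYZ, Finset.mem_filter] at h'; exact h'.1
    have hnoX : ¬ ∃ v ∈ e, v ∈ X' := by
      have h' := heYZm; rw [heYZ, Finset.mem_filter] at h'; exact h'.2
    obtain ⟨a, b, rfl, hadj⟩ := edge_rep (hM.1 e heM)
    have haS : a ∈ S := hsupp _ heM a (by simp)
    have hbS : b ∈ S := hsupp _ heM b (by simp)
    have haX : a ∉ X' := fun h => hnoX ⟨a, by simp, h⟩
    have hbX : b ∉ X' := fun h => hnoX ⟨b, by simp, h⟩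
    have hclass : a.1 ≠ b.1 := adj_ne_fst hle hadj
    obtain ⟨y, z, hyY, hzZ, hrep, hadjyz⟩ :
        ∃ y z, y ∈ Y' ∧ z ∈ Z' ∧ s(a, b) = s(y, z) ∧ K.Adj y z := by
      rw [hS] at haS hbS
      rcases Finset.mem_union.1 haS with haU | haZ'
      · rcases Finset.mem_union.1 haU with haX' | haY'
        · exact absurd haX' haX
        · have hbZ : b ∈ Z' := by
            rcases Finset.mem_union.1 hbS with hbU | hbZ
            · rcases Finset.mem_union.1 hbU with hbX' | hbY'
              · exact absurd hbX' hbX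
              · exact absurd ((hYc a haY').trans (hYc b hbY').symm) hclass
            · exact hbZ
          exact ⟨a, b, haY', hbZ, rfl, hadj⟩
      · have hbY : b ∈ Y' := by
          rcases Finset.mem_union.1 hbS with hbU | hbZ
          · rcases Finset.mem_union.1 hbU with hbX' | hbY'
            · exact absurd hbX' hbX
            · exact hbY'
          · exact absurd ((hZc a haZ').trans (hZc b hbZ).symm) hclass
        exact ⟨b, a, hbY, haZ', Sym2.eq_swap.symm, hadj.symm⟩
    have hyine : y ∈ s(a, b) := by rw [hrep]; simp
    have hzine : z ∈ s(a, b) := by rw [hrep]; simp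
    have hadj1 : K.Adj u1 y := by
      by_contra hna
      apply hnb
      apply Finset.mem_union_left
      rw [hbad1, Finset.mem_filter]
      exact ⟨heYZm, y, hyine, hyY, hna⟩
    have hadj2 : K.Adj u2 z := by
      by_contra hna
      apply hnb
      apply Finset.mem_union_right
      rw [hbad2, Finset.mem_filter]
      exact ⟨heYZm, z, hzine, hzZ, hna⟩
    -- distinctness
    have hu1c : u1.1 = ix := hXc u1 hu1X
    have hu2c : u2.1 = ix := hXc u2 hu2X
    have hyc : y.1 = iy := hYc y hyY
    have hzc : z.1 = iz := hZc z hzZ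
    have d1y : u1 ≠ y := fun h => hxy (hu1c ▸ hyc ▸ congrArg Sigma.fst h)
    have d1z : u1 ≠ z := fun h => hxz (hu1c ▸ hzc ▸ congrArg Sigma.fst h)
    have d2y : u2 ≠ y := fun h => hxy (hu2c ▸ hyc ▸ congrArg Sigma.fst h)
    have d2z : u2 ≠ z := fun h => hxz (hu2c ▸ hzc ▸ congrArg Sigma.fst h)
    have dyz : y ≠ z := fun h => hyz (hyc ▸ hzc ▸ congrArg Sigma.fst h)
    have hu1nf : ∀ f ∈ M, u1 ∉ f := fun f hf hin => hcu1 ⟨f, hf, hin⟩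
    have hu2nf : ∀ f ∈ M, u2 ∉ f := fun f hf hin => hcu2 ⟨f, hf, hin⟩
    have hynf : ∀ f ∈ M.erase s(a, b), y ∉ f := fun f hf hin =>
      hM.2 s(a, b) heM f (Finset.mem_of_mem_erase hf)
        (Finset.ne_of_mem_erase hf).symm y hyine hin
    have hznf : ∀ f ∈ M.erase s(a, b), z ∉ f := fun f hf hin =>
      hM.2 s(a, b) heM f (Finset.mem_of_mem_erase hf)
        (Finset.ne_of_mem_erase hf).symm z hzine hin
    have hn2 : s(u2, z) ∉ M.erase s(a, b) := fun h =>
      hu2nf _ (Finset.mem_of_mem_erase h) (by simp)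
    have hn1 : s(u1, y) ∉ insert s(u2, z) (M.erase s(a, b)) := by
      intro h
      rcases Finset.mem_insert.1 h with heq | h
      · rcases Sym2.eq_iff.1 heq with ⟨h1, -⟩ | ⟨h1, -⟩
        · exact hu12 h1
        · exact d1z h1
      · exact hu1nf _ (Finset.mem_of_mem_erase h) (by simp)
    have hcard : (insert s(u1, y) (insert s(u2, z) (M.erase s(a, b)))).card = M.card + 1 := by
      rw [Finset.card_insert_of_notMem hn1, Finset.card_insert_of_notMem hn2,
        Finset.card_erase_of_mem heM]
      have : 1 ≤ M.card := Finset.card_pos.2 ⟨_, heM⟩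
      omega
    have hmatch' : IsMatching' K (insert s(u1, y) (insert s(u2, z) (M.erase s(a, b)))) := by
      constructor
      · intro f hf
        rcases Finset.mem_insert.1 hf with rfl | hf
        · exact hadj1
        rcases Finset.mem_insert.1 hf with rfl | hf
        · exact hadj2
        exact hM.1 f (Finset.mem_of_mem_erase hf)
      · intro f hf g hg hfg w hwf hwg
        rcases Finset.mem_insert.1 hf with rfl | hf'
        · -- f = s(u1,y)
          rcases Finset.mem_insert.1 hg with rfl | hg'
          · exact hfg rfl
          rcases Finset.mem_insert.1 hg' with rfl | hg''
          · rcases Sym2.mem_iff.1 hwf with rfl | rfl <;>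
              rcases Sym2.mem_iff.1 hwg with h | h
            · exact hu12 h
            · exact d1z h
            · exact d2y h.symm
            · exact dyz h
          · rcases Sym2.mem_iff.1 hwf with rfl | rfl
            · exact hu1nf g (Finset.mem_of_mem_erase hg'') hwg
            · exact hynf g hg'' hwg
        rcases Finset.mem_insert.1 hf' with rfl | hf''
        · -- f = s(u2,z)
          rcases Finset.mem_insert.1 hg with rfl | hg'
          · rcases Sym2.mem_iff.1 hwf with rfl | rfl <;>
              rcases Sym2.mem_iff.1 hwg with h | h
            · exact hu12 h.symm
            · exact d2y h
            · exact d1z h.symm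
            · exact dyz h.symm
          rcases Finset.mem_insert.1 hg' with rfl | hg''
          · exact hfg rfl
          · rcases Sym2.mem_iff.1 hwf with rfl | rfl
            · exact hu2nf g (Finset.mem_of_mem_erase hg'') hwg
            · exact hznf g hg'' hwg
        · -- f old
          rcases Finset.mem_insert.1 hg with rfl | hg'
          · rcases Sym2.mem_iff.1 hwg with rfl | rfl
            · exact hu1nf f (Finset.mem_of_mem_erase hf'') hwf
            · exact hynf f hf'' hwf
          rcases Finset.mem_insert.1 hg' with rfl | hg''
          · rcases Sym2.mem_iff.1 hwg with rfl | rfl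
            · exact hu2nf f (Finset.mem_of_mem_erase hf'') hwf
            · exact hznf f hf'' hwf
          · exact hM.2 f (Finset.mem_of_mem_erase hf'') g (Finset.mem_of_mem_erase hg'')
              hfg w hwf hwg
    have hsupp' : ∀ f ∈ insert s(u1, y) (insert s(u2, z) (M.erase s(a, b))),
        ∀ w, w ∈ f → w ∈ S := by
      intro f hf w hw
      rcases Finset.mem_insert.1 hf with rfl | hf'
      · rcases Sym2.mem_iff.1 hw with rfl | rfl
        · exact (hUmem _ hu1U).1
        · rw [hS]; exact Finset.mem_union_left _ (Finset.mem_union_right _ hyY)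
      rcases Finset.mem_insert.1 hf' with rfl | hf''
      · rcases Sym2.mem_iff.1 hw with rfl | rfl
        · exact (hUmem _ hu2U).1
        · rw [hS]; exact Finset.mem_union_right _ hzZ
      · exact hsupp f (Finset.mem_of_mem_erase hf'') w hw
    have hfin := hmax _ hmatch' hsupp'
    omega
  have : (U.card : ℝ) ≤ 2 * (eYZ.card : ℝ) := by exact_mod_cast hstep1
  linarith

/-- Proposition 6.2. Almost perfect matchings in subsets of the three
partition classes of a graph from `𝒦ηₙ`. -/
theorem stmt13 (n : ℕ) (η : ℝ) (K : SimpleGraph (TriV n)) (hK : KK n η K)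
    (A' B' C' : Finset (TriV n))
    (hA : ∀ v ∈ A', v.1 = 0) (hB : ∀ v ∈ B', v.1 = 1) (hC : ∀ v ∈ C', v.1 = 2)
    (h1 : B'.card ≤ A'.card) (h2 : C'.card ≤ B'.card)
    (h3 : A'.card ≤ B'.card + C'.card) :
    ∃ M : Finset (Sym2 (TriV n)),
      IsMatching' K M ∧
      (∀ e ∈ M, ∀ v : TriV n, v ∈ e → v ∈ A' ∪ B' ∪ C') ∧
      (A'.card : ℝ) + B'.card + C'.card - 4 * η * n - 1
        ≤ (({v | MCovers M v} : Set (TriV n)).ncard : ℝ) := by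
  classical
  set S := A' ∪ B' ∪ C' with hSdef
  obtain ⟨M, hMmem, hMmax⟩ := Finset.exists_max_image
    (Finset.univ.filter (fun M : Finset (Sym2 (TriV n)) =>
      IsMatching' K M ∧ ∀ e ∈ M, ∀ v, v ∈ e → v ∈ S)) Finset.card
    ⟨∅, Finset.mem_filter.2 ⟨Finset.mem_univ _, by simp [IsMatching']⟩⟩
  obtain ⟨hM, hsupp⟩ := (Finset.mem_filter.1 hMmem).2
  have hmax : ∀ M', IsMatching' K M' → (∀ e ∈ M', ∀ v, v ∈ e → v ∈ S) → M'.card ≤ M.card :=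
    fun M' ha hb => hMmax M' (Finset.mem_filter.2 ⟨Finset.mem_univ _, ha, hb⟩)
  refine ⟨M, hM, fun e he v hv => hsupp e he v hv, ?_⟩
  have hset : ({v | MCovers M v} : Set (TriV n)) = ↑(S.filter (fun v => MCovers M v)) := by
    ext v
    simp only [Set.mem_setOf_eq, Finset.coe_filter, Finset.mem_coe, Finset.mem_filter]
    constructor
    · intro h
      obtain ⟨e, he, hv⟩ := h
      exact ⟨hsupp e he v hv, e, he, hv⟩
    · exact fun h => h.2
  rw [hset, Set.ncard_coe_finset]
  have hScard : S.card = A'.card + B'.card + C'.card := by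
    rw [hSdef, Finset.card_union_of_disjoint, Finset.card_union_of_disjoint]
    · rw [Finset.disjoint_left]
      intro v hvA hvB
      have := (hA v hvA).symm.trans (hB v hvB)
      simp at this
    · rw [Finset.disjoint_left]
      intro v hv hvC
      rcases Finset.mem_union.1 hv with hvA | hvB
      · have := (hA v hvA).symm.trans (hC v hvC); simp at this
      · have := (hB v hvB).symm.trans (hC v hvC); simp at this
  have hsplit : (S.filter (fun v => MCovers M v)).card
      + (S.filter (fun v => ¬ MCovers M v)).card = S.card :=
    Finset.card_filter_add_card_filter_not (fun v => MCovers M v)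
  set U := S.filter (fun v => ¬ MCovers M v) with hUdef
  suffices hUb : (U.card : ℝ) ≤ 4 * η * n + 1 by
    have hcast : ((S.filter (fun v => MCovers M v)).card : ℝ) + (U.card : ℝ)
        = (A'.card : ℝ) + B'.card + C'.card := by
      have : (((S.filter (fun v => MCovers M v)).card + U.card : ℕ) : ℝ)
          = ((A'.card + B'.card + C'.card : ℕ) : ℝ) := by rw [hsplit, hScard]
      push_cast at this
      linarith
    linarith
  by_contra hcon
  push_neg at hcon
  rcases Nat.eq_zero_or_pos n with hn | hn
  · subst hn
    have h0 : U.card = 0 := Nat.le_zero.1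
      (le_trans (Finset.card_le_card (Finset.subset_univ U)) (by simp))
    rw [h0] at hcon
    push_cast at hcon
    linarith
  have hηn : 0 < η * n := etaPos hK ⟨0, ⟨0, hn⟩⟩
  have hUmem : ∀ u ∈ U, u ∈ S ∧ ¬ MCovers M u := by
    intro u hu
    simpa [hUdef] using (Finset.mem_filter.1 hu)
  have hnoadj : ∀ u ∈ U, ∀ v ∈ U, ¬ K.Adj u v := by
    intro u hu v hv
    exact no_unc_adj hM hmax hsupp (hUmem u hu).1 (hUmem v hv).1 (hUmem u hu).2 (hUmem v hv).2
  by_cases htwo : ∃ u ∈ U, ∃ v ∈ U, u.1 ≠ v.1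
  · -- uncovered vertices in at least two classes
    obtain ⟨u, huU, v, hvU, huv⟩ := htwo
    have key : ∀ i : Fin 3, ((U.filter (fun x => x.1 = i)).card : ℝ) < η * n := by
      intro i
      obtain ⟨w, hwU, hwi⟩ : ∃ w ∈ U, w.1 ≠ i := by
        by_cases h : u.1 = i
        · exact ⟨v, hvU, fun hv' => huv (h.trans hv'.symm)⟩
        · exact ⟨u, huU, h⟩
      have hsub : U.filter (fun x => x.1 = i)
          ⊆ Finset.univ.filter (fun x : TriV n => x.1 = i ∧ ¬K.Adj w x) := by
        intro x hx
        rw [Finset.mem_filter] at hx ⊢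
        exact ⟨Finset.mem_univ _, hx.2, hnoadj w hwU x hx.1⟩
      have hnn := nonNbr hK w i (Ne.symm hwi)
      have hcast : ((U.filter (fun x => x.1 = i)).card : ℝ)
          ≤ ((Finset.univ.filter (fun x : TriV n => x.1 = i ∧ ¬K.Adj w x)).card : ℝ) := by
        exact_mod_cast Finset.card_le_card hsub
      linarith
    have hv3 : ∀ c : Fin 3, c = 0 ∨ c = 1 ∨ c = 2 := by decide
    have hUsub : U ⊆ (U.filter (fun x => x.1 = 0)) ∪ (U.filter (fun x => x.1 = 1))
        ∪ (U.filter (fun x => x.1 = 2)) := by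
      intro x hx
      rcases hv3 x.1 with h | h | h
      · exact Finset.mem_union_left _ (Finset.mem_union_left _ (Finset.mem_filter.2 ⟨hx, h⟩))
      · exact Finset.mem_union_left _ (Finset.mem_union_right _ (Finset.mem_filter.2 ⟨hx, h⟩))
      · exact Finset.mem_union_right _ (Finset.mem_filter.2 ⟨hx, h⟩)
    have hUsum : U.card ≤ (U.filter (fun x => x.1 = 0)).card
        + (U.filter (fun x => x.1 = 1)).card + (U.filter (fun x => x.1 = 2)).card := by
      refine le_trans (Finset.card_le_card hUsub) (le_trans (Finset.card_union_le _ _) ?_)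
      exact Nat.add_le_add_right (Finset.card_union_le (U.filter (fun x => x.1 = 0)) (U.filter (fun x => x.1 = 1))) _
    have hUsumR : (U.card : ℝ) ≤ ((U.filter (fun x => x.1 = 0)).card : ℝ)
        + ((U.filter (fun x => x.1 = 1)).card : ℝ)
        + ((U.filter (fun x => x.1 = 2)).card : ℝ) := by exact_mod_cast hUsum
    have k0 := key 0
    have k1 := key 1
    have k2 := key 2
    linarith
  · -- all uncovered vertices in one class
    push_neg at htwo
    have hUne : U.Nonempty := by
      rw [← Finset.card_pos]
      by_contra hc
      push_neg at hc
      have h0 : U.card = 0 := Nat.le_zero.1 hc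
      rw [h0] at hcon
      push_cast at hcon
      linarith
    obtain ⟨u0, hu0⟩ := hUne
    have hu0S : u0 ∈ S := (hUmem u0 hu0).1
    have hUclass : ∀ u ∈ U, u.1 = u0.1 := fun u hu => htwo u hu u0 hu0
    rw [hSdef] at hu0S
    rcases Finset.mem_union.1 hu0S with h0AB | h0C
    · rcases Finset.mem_union.1 h0AB with h0A | h0B
      · -- all uncovered in A'
        have hUX : ∀ u ∈ S, ¬ MCovers M u → u ∈ A' := by
          intro u huS hnc
          have huU : u ∈ U := Finset.mem_filter.2 ⟨huS, hnc⟩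
          have hcl : u.1 = 0 := (hUclass u huU).trans (hA u0 h0A)
          rw [hSdef] at huS
          rcases Finset.mem_union.1 huS with hAB | huC
          · rcases Finset.mem_union.1 hAB with huA | huB
            · exact huA
            · exact absurd ((hB u huB).symm.trans hcl) (by decide)
          · exact absurd ((hC u huC).symm.trans hcl) (by decide)
        have hres := oneClass hK S A' B' C' 0 1 2 (by decide) (by decide) (by decide)
          hA hB hC hSdef h3 hM hsupp hmax hUX
        rw [← hUdef] at hres
        linarith
      · -- all uncovered in B'
        have hUX : ∀ u ∈ S, ¬ MCovers M u → u ∈ B' := by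
          intro u huS hnc
          have huU : u ∈ U := Finset.mem_filter.2 ⟨huS, hnc⟩
          have hcl : u.1 = 1 := (hUclass u huU).trans (hB u0 h0B)
          rw [hSdef] at huS
          rcases Finset.mem_union.1 huS with hAB | huC
          · rcases Finset.mem_union.1 hAB with huA | huB
            · exact absurd ((hA u huA).symm.trans hcl) (by decide)
            · exact huB
          · exact absurd ((hC u huC).symm.trans hcl) (by decide)
        have hSB : S = B' ∪ A' ∪ C' := by
          rw [hSdef]
          ext x
          simp only [Finset.mem_union]
          tauto
        have hres := oneClass hK S B' A' C' 1 0 2 (by decide) (by decide) (by decide)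
          hB hA hC hSB (by omega) hM hsupp hmax hUX
        rw [← hUdef] at hres
        linarith
    · -- all uncovered in C'
      have hUX : ∀ u ∈ S, ¬ MCovers M u → u ∈ C' := by
        intro u huS hnc
        have huU : u ∈ U := Finset.mem_filter.2 ⟨huS, hnc⟩
        have hcl : u.1 = 2 := (hUclass u huU).trans (hC u0 h0C)
        rw [hSdef] at huS
        rcases Finset.mem_union.1 huS with hAB | huC
        · rcases Finset.mem_union.1 hAB with huA | huB
          · exact absurd ((hA u huA).symm.trans hcl) (by decide)
          · exact absurd ((hB u huB).symm.trans hcl) (by decide)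
        · exact huC
      have hSC : S = C' ∪ A' ∪ B' := by
        rw [hSdef]
        ext x
        simp only [Finset.mem_union]
        tauto
      have hres := oneClass hK S C' A' B' 2 0 1 (by decide) (by decide) (by decide)
        hC hA hB hSC (by omega) hM hsupp hmax hUX
      rw [← hUdef] at hres
      linarith
end
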